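/- Let D be a set of edge failures, let u, v be connected in G−D, and let r = rank_{G−D}(u,v). If w is a vertex on π_{G−D}(u,v) such that both π(u,w) and π(w,v) contain an edge of D, then rank_{G−D}(u,w) ≤ r−1 and rank_{G−D}(w,v) ≤ r−1. -/

import Mathlib

open SimpleGraph

variable {V : Type*}

/-- Total weight of a walk with respect to edge weights `w`. -/
def walkWeight (w : Sym2 V → ℝ) {G : SimpleGraph V} {a b : V} (p : G.Walk a b) : ℝ :=
  (p.edges.map w).sum

/-- `p` is the/a minimum-weight path from `a` to `b` in `G`. -/
def IsShortestPath (w : Sym2 V → ℝ) (G : SimpleGraph V) {a b : V} (p : G.Walk a b) : Prop :=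
  p.IsPath ∧ ∀ q : G.Walk a b, q.IsPath → walkWeight w p ≤ walkWeight w q

/-- `Decomposable w G k p` : `p` is the concatenation of at most `k+1` shortest paths
of `G` interleaved with at most `k` single edges. -/
inductive Decomposable (w : Sym2 V → ℝ) (G : SimpleGraph V) :
    ℕ → ∀ {a b : V}, G.Walk a b → Prop
  | single {a b : V} (k : ℕ) (p : G.Walk a b) (hp : IsShortestPath w G p) :
      Decomposable w G k p
  | cons {a b c d : V} (k : ℕ) (p : G.Walk a b) (h : G.Adj b c) (q : G.Walk c d)
      (hp : IsShortestPath w G p) (hq : Decomposable w G k q) :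
      Decomposable w G (k + 1) (p.append (Walk.cons h q))

/-- The rank of a walk `p` in `G`: the least `k` such that `p` is `k`-decomposable. -/
noncomputable def pathRank (w : Sym2 V → ℝ) (G : SimpleGraph V) {a b : V} (p : G.Walk a b) : ℕ :=
  sInf {k | Decomposable w G k p}

/-! ### Auxiliary lemmas on `takeUntil` / `dropUntil` -/

section TakeDrop
variable {G : SimpleGraph V} [DecidableEq V]

lemma takeUntil_start {a b : V} (p : G.Walk a b) (h : a ∈ p.support) :
    p.takeUntil a h = Walk.nil := by
  cases p with
  | nil => rfl
  | cons r q => simp [Walk.takeUntil]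

lemma dropUntil_start {a b : V} (p : G.Walk a b) (h : a ∈ p.support) :
    p.dropUntil a h = p := by
  cases p with
  | nil => rfl
  | cons r q => simp [Walk.dropUntil]

lemma takeUntil_cons_ne {a b c x : V} (r : G.Adj a b) (p : G.Walk b c) (hax : a ≠ x)
    (h : x ∈ (Walk.cons r p).support) :
    (Walk.cons r p).takeUntil x h =
      Walk.cons r (p.takeUntil x (by simpa [hax.symm] using h)) := by
  simp [Walk.takeUntil, hax]

lemma dropUntil_cons_ne {a b c x : V} (r : G.Adj a b) (p : G.Walk b c) (hax : a ≠ x)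
    (h : x ∈ (Walk.cons r p).support) :
    (Walk.cons r p).dropUntil x h = p.dropUntil x (by simpa [hax.symm] using h) := by
  simp [Walk.dropUntil, hax]

lemma takeUntil_append_left {a b c x : V} (p : G.Walk a b) (q : G.Walk b c)
    (hx : x ∈ p.support) (h : x ∈ (p.append q).support) :
    (p.append q).takeUntil x h = p.takeUntil x hx := by
  induction p with
  | nil =>
    simp only [Walk.support_nil, List.mem_singleton] at hx
    subst hx
    simp [takeUntil_start]
  | cons r p ih =>
    rename_i a' b' _
    by_cases hax : a' = x
    · subst hax
      simp [takeUntil_start]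
    · have hx' : x ∈ p.support := by simpa [Ne.symm hax] using hx
      show (Walk.cons r (p.append q)).takeUntil x h = _
      rw [takeUntil_cons_ne r (p.append q) hax h, takeUntil_cons_ne r p hax hx]
      exact congrArg _ (ih _ hx' _)

lemma dropUntil_append_left {a b c x : V} (p : G.Walk a b) (q : G.Walk b c)
    (hx : x ∈ p.support) (h : x ∈ (p.append q).support) :
    (p.append q).dropUntil x h = (p.dropUntil x hx).append q := by
  induction p with
  | nil =>
    simp only [Walk.support_nil, List.mem_singleton] at hx
    subst hx
    simp [dropUntil_start]
  | cons r p ih =>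
    rename_i a' b' _
    by_cases hax : a' = x
    · subst hax
      simp [dropUntil_start]
    · have hx' : x ∈ p.support := by simpa [Ne.symm hax] using hx
      show (Walk.cons r (p.append q)).dropUntil x h = _
      rw [dropUntil_cons_ne r (p.append q) hax h, dropUntil_cons_ne r p hax hx]
      exact ih _ hx' _

lemma takeUntil_append_right {a b c x : V} (p : G.Walk a b) (q : G.Walk b c)
    (hxp : x ∉ p.support) (hx : x ∈ q.support) (h : x ∈ (p.append q).support) :
    (p.append q).takeUntil x h = p.append (q.takeUntil x hx) := by
  induction p with
  | nil => simp
  | cons r p ih =>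
    rename_i a' b' _
    have hax : a' ≠ x := fun hh => hxp (by simp [hh])
    have hxp' : x ∉ p.support := fun hh => hxp (by simp [hh])
    show (Walk.cons r (p.append q)).takeUntil x h = Walk.cons r (p.append (q.takeUntil x hx))
    rw [takeUntil_cons_ne r (p.append q) hax h]
    exact congrArg _ (ih _ hxp' hx _)

lemma dropUntil_append_right {a b c x : V} (p : G.Walk a b) (q : G.Walk b c)
    (hxp : x ∉ p.support) (hx : x ∈ q.support) (h : x ∈ (p.append q).support) :
    (p.append q).dropUntil x h = q.dropUntil x hx := by
  induction p with
  | nil => simp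
  | cons r p ih =>
    rename_i a' b' _
    have hax : a' ≠ x := fun hh => hxp (by simp [hh])
    have hxp' : x ∉ p.support := fun hh => hxp (by simp [hh])
    show (Walk.cons r (p.append q)).dropUntil x h = q.dropUntil x hx
    rw [dropUntil_cons_ne r (p.append q) hax h]
    exact ih _ hxp' hx _

lemma takeUntil_mapLe {G G' : SimpleGraph V} (hle : G ≤ G') {a b x : V} (p : G.Walk a b)
    (hx : x ∈ p.support) (hx' : x ∈ (p.mapLe hle).support) :
    (p.mapLe hle).takeUntil x hx' = (p.takeUntil x hx).mapLe hle := by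
  induction p with
  | nil =>
    simp only [Walk.support_nil, List.mem_singleton] at hx
    subst hx
    simp [takeUntil_start]
  | cons r p ih =>
    rename_i a' b' _
    by_cases hax : a' = x
    · subst hax
      show (Walk.cons (hle r) (p.mapLe hle)).takeUntil a' hx' = _
      simp [takeUntil_start]
    · have hx2 : x ∈ p.support := by simpa [Ne.symm hax] using hx
      show (Walk.cons (hle r) (p.mapLe hle)).takeUntil x hx' = _
      rw [takeUntil_cons_ne (hle r) (p.mapLe hle) hax hx', takeUntil_cons_ne r p hax hx]
      show _ = Walk.cons (hle r) ((p.takeUntil x (by simpa [Ne.symm hax] using hx)).mapLe hle)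
      exact congrArg _ (ih hx2 _)

lemma dropUntil_mapLe {G G' : SimpleGraph V} (hle : G ≤ G') {a b x : V} (p : G.Walk a b)
    (hx : x ∈ p.support) (hx' : x ∈ (p.mapLe hle).support) :
    (p.mapLe hle).dropUntil x hx' = (p.dropUntil x hx).mapLe hle := by
  induction p with
  | nil =>
    simp only [Walk.support_nil, List.mem_singleton] at hx
    subst hx
    simp [dropUntil_start]
  | cons r p ih =>
    rename_i a' b' _
    by_cases hax : a' = x
    · subst hax
      show (Walk.cons (hle r) (p.mapLe hle)).dropUntil a' hx' = _
      rw [dropUntil_start (Walk.cons (hle r) (p.mapLe hle)) hx', dropUntil_start _ hx]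
      rfl
    · have hx2 : x ∈ p.support := by simpa [Ne.symm hax] using hx
      show (Walk.cons (hle r) (p.mapLe hle)).dropUntil x hx' = _
      rw [dropUntil_cons_ne (hle r) (p.mapLe hle) hax hx', dropUntil_cons_ne r p hax hx]
      exact ih hx2 _

end TakeDrop

/-! ### Auxiliary lemmas on weights and shortest paths -/

section Weight
variable {w : Sym2 V → ℝ} {G : SimpleGraph V} [DecidableEq V]

lemma walkWeight_append {a b c : V} (p : G.Walk a b) (q : G.Walk b c) :
    walkWeight w (p.append q) = walkWeight w p + walkWeight w q := by
  simp [walkWeight, Walk.edges_append]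

lemma isShortestPath_nil {a : V} : IsShortestPath w G (Walk.nil : G.Walk a a) := by
  refine ⟨Walk.IsPath.nil, fun q hq => ?_⟩
  rw [(Walk.isPath_iff_eq_nil (p := q)).mp hq]

lemma sum_map_le_of_nodup_subset {l₁ l₂ : List (Sym2 V)} (hn : l₁.Nodup) (hs : l₁ ⊆ l₂)
    (h0 : ∀ e ∈ l₂, 0 ≤ w e) : (l₁.map w).sum ≤ (l₂.map w).sum := by
  obtain ⟨l, hp, hsl⟩ := hn.subperm hs
  calc (l₁.map w).sum = (l.map w).sum := ((hp.map w).sum_eq).symm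
    _ ≤ (l₂.map w).sum := by
        refine (hsl.map w).sum_le_sum ?_
        intro a ha
        obtain ⟨e, he, rfl⟩ := List.mem_map.mp ha
        exact h0 e he

lemma walkWeight_bypass_le (hw : ∀ e ∈ G.edgeSet, 0 < w e) {a b : V} (p : G.Walk a b) :
    walkWeight w p.bypass ≤ walkWeight w p :=
  sum_map_le_of_nodup_subset p.bypass_isPath.isTrail.edges_nodup p.edges_bypass_subset
    (fun e he => (hw e (p.edges_subset_edgeSet he)).le)

lemma IsShortestPath.of_append_left' (hw : ∀ e ∈ G.edgeSet, 0 < w e) {a b c : V}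
    {p : G.Walk a b} {q : G.Walk b c} (h : IsShortestPath w G (p.append q)) :
    IsShortestPath w G p := by
  refine ⟨h.1.of_append_left, fun p' hp' => ?_⟩
  have h1 := h.2 (p'.append q).bypass (p'.append q).bypass_isPath
  have h2 := walkWeight_bypass_le hw (p'.append q)
  have h3 := walkWeight_append (w := w) p q
  have h4 := walkWeight_append (w := w) p' q
  linarith

lemma IsShortestPath.of_append_right' (hw : ∀ e ∈ G.edgeSet, 0 < w e) {a b c : V}
    {p : G.Walk a b} {q : G.Walk b c} (h : IsShortestPath w G (p.append q)) :
    IsShortestPath w G q := by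
  refine ⟨h.1.of_append_right, fun q' hq' => ?_⟩
  have h1 := h.2 (p.append q').bypass (p.append q').bypass_isPath
  have h2 := walkWeight_bypass_le hw (p.append q')
  have h3 := walkWeight_append (w := w) p q
  have h4 := walkWeight_append (w := w) p q'
  linarith

lemma IsShortestPath.takeUntil' (hw : ∀ e ∈ G.edgeSet, 0 < w e) {a b x : V}
    {p : G.Walk a b} (hp : IsShortestPath w G p) (hx : x ∈ p.support) :
    IsShortestPath w G (p.takeUntil x hx) := by
  have hp' : IsShortestPath w G ((p.takeUntil x hx).append (p.dropUntil x hx)) := by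
    rw [Walk.take_spec]; exact hp
  exact hp'.of_append_left' hw

lemma IsShortestPath.dropUntil' (hw : ∀ e ∈ G.edgeSet, 0 < w e) {a b x : V}
    {p : G.Walk a b} (hp : IsShortestPath w G p) (hx : x ∈ p.support) :
    IsShortestPath w G (p.dropUntil x hx) := by
  have hp' : IsShortestPath w G ((p.takeUntil x hx).append (p.dropUntil x hx)) := by
    rw [Walk.take_spec]; exact hp
  exact hp'.of_append_right' hw

/-! ### Lemmas on `Decomposable` -/

lemma decomposable_of_length {a b : V} (p : G.Walk a b) : Decomposable w G p.length p := by
  induction p with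
  | nil => exact .single _ _ isShortestPath_nil
  | cons h q ih =>
    have := Decomposable.cons q.length Walk.nil h q isShortestPath_nil ih
    simpa using this

lemma isShortestPath_of_decomposable_zero {a b : V} {p : G.Walk a b}
    (h : Decomposable w G 0 p) : IsShortestPath w G p := by
  cases h with
  | single _ _ hp => exact hp

/-- The key splitting lemma: if a walk is `k`-decomposable, then at any vertex `x` on it,
its two halves are `i`- and `j`-decomposable with `i + j ≤ k`. -/
lemma decomposable_split (hw : ∀ e ∈ G.edgeSet, 0 < w e)
    {a b : V} {k : ℕ} {s : G.Walk a b} (hs : Decomposable w G k s) :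
    ∀ (x : V) (hx : x ∈ s.support),
      ∃ i j, i + j ≤ k ∧ Decomposable w G i (s.takeUntil x hx) ∧
        Decomposable w G j (s.dropUntil x hx) := by
  induction hs with
  | single k p hp =>
    intro x hx
    exact ⟨0, 0, Nat.zero_le _, .single _ _ (hp.takeUntil' hw hx),
      .single _ _ (hp.dropUntil' hw hx)⟩
  | cons k p h q hp hq ih =>
    rename_i aa bb cc dd
    intro x hx
    by_cases hxp : x ∈ p.support
    · refine ⟨0, k + 1, by omega, ?_, ?_⟩
      · rw [takeUntil_append_left _ _ hxp]
        exact .single _ _ (hp.takeUntil' hw hxp)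
      · rw [dropUntil_append_left _ _ hxp]
        exact .cons k _ h q (hp.dropUntil' hw hxp) hq
    · have hx2 : x ∈ (Walk.cons h q).support := by
        rcases (Walk.mem_support_append_iff p (Walk.cons h q)).mp hx with h1 | h1
        · exact absurd h1 hxp
        · exact h1
      have hbx : bb ≠ x := fun hh => hxp (hh ▸ Walk.end_mem_support p)
      have hxq : x ∈ q.support := by
        have h3 := hx2
        simp only [Walk.support_cons, List.mem_cons] at h3
        rcases h3 with h1 | h1
        · exact absurd h1.symm hbx
        · exact h1
      obtain ⟨i, j, hij, h1, h2⟩ := ih x hxq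
      refine ⟨i + 1, j, by omega, ?_, ?_⟩
      · rw [takeUntil_append_right _ _ hxp hx2, takeUntil_cons_ne _ _ hbx]
        exact .cons i p h _ hp h1
      · rw [dropUntil_append_right _ _ hxp hx2, dropUntil_cons_ne _ _ hbx]
        exact h2

end Weight

/-- Let `D` be a set of edge failures, `u, v` connected in `G − D`, and
`r = rank_{G−D}(u,v)`.  If `x` is a vertex on `π_{G−D}(u,v)` such that both `π(u,x)` and
`π(x,v)` contain an edge of `D`, then `rank_{G−D}(u,x) ≤ r − 1` and `rank_{G−D}(x,v) ≤ r − 1`. -/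
theorem stmt1 [Fintype V] [DecidableEq V] (G : SimpleGraph V) (w : Sym2 V → ℝ)
    (hw : ∀ e ∈ G.edgeSet, 0 < w e)
    (huniqG : ∀ (a b : V) (p q : G.Walk a b),
      IsShortestPath w G p → IsShortestPath w G q → p = q)
    (D : Set (Sym2 V)) (hDsub : D ⊆ G.edgeSet)
    (huniqD : ∀ (a b : V) (p q : (G.deleteEdges D).Walk a b),
      IsShortestPath w (G.deleteEdges D) p → IsShortestPath w (G.deleteEdges D) q → p = q)
    (u v : V) (P : (G.deleteEdges D).Walk u v)
    (hP : IsShortestPath w (G.deleteEdges D) P)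
    (r : ℕ) (hr : r = pathRank w G (P.mapLe (SimpleGraph.deleteEdges_le D)))
    (x : V) (hx : x ∈ P.support)
    -- both π(u,x) and π(x,v) contain an edge of D
    (Pux : G.Walk u x) (hPux : IsShortestPath w G Pux)
    (Pxv : G.Walk x v) (hPxv : IsShortestPath w G Pxv)
    (hux : ∃ e ∈ Pux.edges, e ∈ D) (hxv : ∃ e ∈ Pxv.edges, e ∈ D)
    -- the shortest paths π_{G−D}(u,x) and π_{G−D}(x,v)
    (Qux : (G.deleteEdges D).Walk u x) (hQux : IsShortestPath w (G.deleteEdges D) Qux)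
    (Qxv : (G.deleteEdges D).Walk x v) (hQxv : IsShortestPath w (G.deleteEdges D) Qxv) :
    pathRank w G (Qux.mapLe (SimpleGraph.deleteEdges_le D)) ≤ r - 1 ∧
    pathRank w G (Qxv.mapLe (SimpleGraph.deleteEdges_le D)) ≤ r - 1 := by
  have hle := SimpleGraph.deleteEdges_le (G := G) D
  have hw' : ∀ e ∈ (G.deleteEdges D).edgeSet, 0 < w e := fun e he =>
    hw e (SimpleGraph.edgeSet_mono (SimpleGraph.deleteEdges_le D) he)
  have hQuxEq : Qux = P.takeUntil x hx := huniqD u x Qux _ hQux (hP.takeUntil' hw' hx)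
  have hQxvEq : Qxv = P.dropUntil x hx := huniqD x v Qxv _ hQxv (hP.dropUntil' hw' hx)
  have hxs : x ∈ (P.mapLe (SimpleGraph.deleteEdges_le D)).support := by
    simpa [Walk.support_map] using hx
  have hdec : Decomposable w G r (P.mapLe (SimpleGraph.deleteEdges_le D)) := by
    have hne : {k | Decomposable w G k (P.mapLe (SimpleGraph.deleteEdges_le D))}.Nonempty :=
      ⟨_, decomposable_of_length _⟩
    rw [hr]
    exact Nat.sInf_mem hne
  obtain ⟨i, j, hij, hti, htj⟩ := decomposable_split hw hdec x hxs
  have hte : (P.mapLe (SimpleGraph.deleteEdges_le D)).takeUntil x hxs =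
      Qux.mapLe (SimpleGraph.deleteEdges_le D) := by
    rw [takeUntil_mapLe (SimpleGraph.deleteEdges_le D) P hx hxs, hQuxEq]
  have hde : (P.mapLe (SimpleGraph.deleteEdges_le D)).dropUntil x hxs =
      Qxv.mapLe (SimpleGraph.deleteEdges_le D) := by
    rw [dropUntil_mapLe (SimpleGraph.deleteEdges_le D) P hx hxs, hQxvEq]
  rw [hte] at hti
  rw [hde] at htj
  -- neither projected path is a shortest path of G
  have hnux : ¬ IsShortestPath w G (Qux.mapLe (SimpleGraph.deleteEdges_le D)) := by
    intro hsp
    have heq := huniqG u x Pux _ hPux hsp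
    obtain ⟨e, heP, heD⟩ := hux
    rw [heq] at heP
    have heQ : e ∈ Qux.edges := by
      simpa [Walk.edges_map, Sym2.map_id'] using heP
    have hmem := Qux.edges_subset_edgeSet heQ
    rw [SimpleGraph.edgeSet_deleteEdges] at hmem
    exact hmem.2 heD
  have hnxv : ¬ IsShortestPath w G (Qxv.mapLe (SimpleGraph.deleteEdges_le D)) := by
    intro hsp
    have heq := huniqG x v Pxv _ hPxv hsp
    obtain ⟨e, heP, heD⟩ := hxv
    rw [heq] at heP
    have heQ : e ∈ Qxv.edges := by
      simpa [Walk.edges_map, Sym2.map_id'] using heP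
    have hmem := Qxv.edges_subset_edgeSet heQ
    rw [SimpleGraph.edgeSet_deleteEdges] at hmem
    exact hmem.2 heD
  have hi1 : 1 ≤ i := by
    rcases Nat.eq_zero_or_pos i with h0 | h0
    · exact absurd (isShortestPath_of_decomposable_zero (h0 ▸ hti)) hnux
    · exact h0
  have hj1 : 1 ≤ j := by
    rcases Nat.eq_zero_or_pos j with h0 | h0
    · exact absurd (isShortestPath_of_decomposable_zero (h0 ▸ htj)) hnxv
    · exact h0
  constructor
  · have hle' : pathRank w G (Qux.mapLe (SimpleGraph.deleteEdges_le D)) ≤ i :=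
      Nat.sInf_le hti
    omega
  · have hle' : pathRank w G (Qxv.mapLe (SimpleGraph.deleteEdges_le D)) ≤ j :=
      Nat.sInf_le htj
    omega
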